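/- Let Λ be a set of nonvertical planes in ℝ³ in general position and let k be a nonnegative integer. Let a, b ∈ Λ be distinct with intersection line l_{a,b}, let p ∈ l_{a,b} be a point not lying on any plane of D = Λ \ {a,b}, and let ρ be one of the two rays of l_{a,b} emanating from p. Set D_ρ = {d ∈ D : d intersects ρ}, D^k = {d ∈ D : C_{a,b,d} ∈ C^k}, h_up = {d ∈ D : d(p_x,p_y) > p_z} and h_down = {d ∈ D : d(p_x,p_y) < p_z}. Then | |h_up ∩ D^k ∩ D_ρ| − |h_down ∩ D^k ∩ D_ρ| | ≤ 1. -/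

import Mathlib

open scoped Classical

noncomputable section

/-- A nonvertical plane in ℝ³, identified with the (affine) function `ℝ² → ℝ` whose graph it is
(curried). -/
abbrev PP : Type := ℝ → ℝ → ℝ

/-- `a` is an affine function, i.e. its graph is a nonvertical plane. -/
def IsAffinePlane (a : PP) : Prop :=
  ∃ α β δ : ℝ, ∀ x y : ℝ, a x y = α * x + β * y + δ

/-- A set of nonvertical planes in general position:
the linear parts of any two are distinct (the difference is nonconstant, so any two planes
meet in a line), any three planes meet in exactly one point, and no four planes have a
common point. -/
def PlaneFamily (Λ : Finset PP) : Prop :=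
  (∀ a ∈ Λ, IsAffinePlane a) ∧
  (∀ a ∈ Λ, ∀ b ∈ Λ, a ≠ b → ∃ x y x' y' : ℝ, a x y - b x y ≠ a x' y' - b x' y') ∧
  (∀ a ∈ Λ, ∀ b ∈ Λ, ∀ c ∈ Λ, a ≠ b → a ≠ c → b ≠ c →
    ∃! q : ℝ × ℝ, a q.1 q.2 = b q.1 q.2 ∧ a q.1 q.2 = c q.1 q.2) ∧
  (∀ a ∈ Λ, ∀ b ∈ Λ, ∀ c ∈ Λ, ∀ d ∈ Λ, a ≠ b → a ≠ c → a ≠ d → b ≠ c → b ≠ d → c ≠ d →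
    ¬ ∃ x y : ℝ, a x y = b x y ∧ a x y = c x y ∧ a x y = d x y)

/-- The level of the point `(x, y, z)`: the number of members of `Λ` passing strictly below it. -/
def level (Λ : Finset PP) (x y z : ℝ) : ℕ :=
  (Λ.filter fun a => a x y < z).card

/-- The triple `s = {a,b,c}` spans a `k`-corridor: its common (triple intersection) point
is at level `k`. -/
def IsKCorridorTriple (Λ : Finset PP) (k : ℕ) (s : Finset PP) : Prop :=
  ∃ x y z : ℝ, (∀ a ∈ s, a x y = z) ∧ level Λ x y z = k

/-- The set `C^k` of `k`-corridors, encoded by the 3-element subsets of `Λ` spanning them. -/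
def kCorridors (Λ : Finset PP) (k : ℕ) : Finset (Finset PP) :=
  (Λ.powersetCard 3).filter (IsKCorridorTriple Λ k)

/-- The corridor of a triple `s`: the open region strictly between the lower and the upper
envelope of the three planes in `s`. Points of ℝ³ are `(x, (y, z))`. -/
def corridorSet (s : Finset PP) : Set (ℝ × ℝ × ℝ) :=
  {p | (∃ a ∈ s, a p.1 p.2.1 < p.2.2) ∧ (∃ a ∈ s, p.2.2 < a p.1 p.2.1)}

/-- The common intersection of the members of `s`. -/
def curveSet (s : Finset PP) : Set (ℝ × ℝ × ℝ) :=
  {p | ∀ a ∈ s, a p.1 p.2.1 = p.2.2}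

/-- The corridor spanned by `s₁` is immersed in the corridor spanned by `s₂`: they share
exactly one plane, and the intersection line of the other two planes of `s₁` is fully
contained in the corridor of `s₂`. -/
def Immersed (s₁ s₂ : Finset PP) : Prop :=
  (s₁ ∩ s₂).card = 1 ∧ curveSet (s₁ \ s₂) ⊆ corridorSet s₂

/-- `X^k`: the number of ordered pairs of `k`-corridors such that the first is immersed
in the second. -/
def numImmersedPairs (Λ : Finset PP) (k : ℕ) : ℕ :=
  ((kCorridors Λ k ×ˢ kCorridors Λ k).filter fun q => Immersed q.1 q.2).card

/-- Auxiliary walk lemma. -/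
lemma walk_lemma (m : ℤ) (ε : ℝ → ℤ) (hε : ∀ x, ε x = 1 ∨ ε x = -1) (E : Finset ℝ) :
    ((E.filter fun x => ε x = 1 ∧ (E.filter (· < x)).sum ε = m).card : ℤ)
      - ((E.filter fun x => ε x = -1 ∧ (E.filter (· < x)).sum ε = m + 1).card : ℤ)
    = (if m + 1 ≤ E.sum ε then (1:ℤ) else 0) - (if m + 1 ≤ (0:ℤ) then 1 else 0) := by
  induction E using Finset.induction_on_max with
  | empty => simp
  | insert a E ha ih =>
    have haE : a ∉ E := fun h => lt_irrefl a (ha a h)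
    have hfa : ∀ x ∈ E, (insert a E).filter (· < x) = E.filter (· < x) := by
      intro x hx
      rw [Finset.filter_insert, if_neg (not_lt.2 (ha x hx).le)]
    have hfa2 : Finset.filter (fun x => x < a) (insert a E) = E := by
      rw [Finset.filter_insert]
      simp only [lt_irrefl, if_false]
      exact Finset.filter_true_of_mem fun x hx => ha x hx
    have e1 : Finset.filter (fun x => ε x = 1 ∧ ((insert a E).filter (· < x)).sum ε = m) E
        = Finset.filter (fun x => ε x = 1 ∧ (E.filter (· < x)).sum ε = m) E := by
      apply Finset.filter_congr; intro x hx; rw [hfa x hx]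
    have e2 : Finset.filter (fun x => ε x = -1 ∧ ((insert a E).filter (· < x)).sum ε = m + 1) E
        = Finset.filter (fun x => ε x = -1 ∧ (E.filter (· < x)).sum ε = m + 1) E := by
      apply Finset.filter_congr; intro x hx; rw [hfa x hx]
    have E1 : Finset.filter (fun x => ε x = 1 ∧ ((insert a E).filter (· < x)).sum ε = m) (insert a E)
        = if ε a = 1 ∧ E.sum ε = m then
            insert a (Finset.filter (fun x => ε x = 1 ∧ (E.filter (· < x)).sum ε = m) E)
          else Finset.filter (fun x => ε x = 1 ∧ (E.filter (· < x)).sum ε = m) E := by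
      rw [Finset.filter_insert, hfa2, e1]
    have E2 : Finset.filter (fun x => ε x = -1 ∧ ((insert a E).filter (· < x)).sum ε = m + 1) (insert a E)
        = if ε a = -1 ∧ E.sum ε = m + 1 then
            insert a (Finset.filter (fun x => ε x = -1 ∧ (E.filter (· < x)).sum ε = m + 1) E)
          else Finset.filter (fun x => ε x = -1 ∧ (E.filter (· < x)).sum ε = m + 1) E := by
      rw [Finset.filter_insert, hfa2, e2]
    have hni1 : a ∉ Finset.filter (fun x => ε x = 1 ∧ (E.filter (· < x)).sum ε = m) E :=
      fun h => haE (Finset.mem_of_mem_filter a h)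
    have hni2 : a ∉ Finset.filter (fun x => ε x = -1 ∧ (E.filter (· < x)).sum ε = m + 1) E :=
      fun h => haE (Finset.mem_of_mem_filter a h)
    rw [E1, E2, Finset.sum_insert haE]
    have hS : (∑ x ∈ E, ε x) = E.sum ε := rfl
    rw [hS]
    split_ifs at ih
    all_goals (
      rcases hε a with h1 | h1 <;> rw [h1] <;> split_ifs <;>
        (try simp only [Finset.card_insert_of_notMem hni1, Finset.card_insert_of_notMem hni2]) <;>
        first | omega | (exfalso; simp_all))


/-- Let `Λ` be a set of nonvertical planes in ℝ³ in general position, `k` a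
nonnegative integer, `a ≠ b` in `Λ`, `p = (px,py,pz) ∈ l_{a,b}` not on any plane of
`D = Λ \ {a,b}`, and `ρ` one of the two rays of `l_{a,b}` emanating from `p` (direction `w`,
parameters `s > 0`). With `D_ρ` the planes of `D` meeting `ρ`,
`D^k = {d ∈ D : C_{a,b,d} ∈ C^k}`, and `h_up`/`h_down` the planes of `D` crossing the
vertical line through `p` above/below `p`, we have
`| |h_up ∩ D^k ∩ D_ρ| − |h_down ∩ D^k ∩ D_ρ| | ≤ 1`. -/
theorem statement17 (Λ : Finset PP) (k : ℕ) (hΛ : PlaneFamily Λ)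
    (a b : PP) (ha : a ∈ Λ) (hb : b ∈ Λ) (hab : a ≠ b)
    (px py pz : ℝ) (hpa : a px py = pz) (hpb : b px py = pz)
    (hgen : ∀ d ∈ Λ \ {a, b}, d px py ≠ pz)
    (w : ℝ × ℝ × ℝ) (hw : w ≠ 0)
    (hline : ∀ t : ℝ, a (px + t * w.1) (py + t * w.2.1) = pz + t * w.2.2 ∧
        b (px + t * w.1) (py + t * w.2.1) = pz + t * w.2.2) :
    |((((Λ \ {a, b}).filter fun e =>
          (∃ s : ℝ, 0 < s ∧ e (px + s * w.1) (py + s * w.2.1) = pz + s * w.2.2) ∧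
            pz < e px py ∧ IsKCorridorTriple Λ k {a, b, e}).card : ℤ) -
      (((Λ \ {a, b}).filter fun e =>
          (∃ s : ℝ, 0 < s ∧ e (px + s * w.1) (py + s * w.2.1) = pz + s * w.2.2) ∧
            e px py < pz ∧ IsKCorridorTriple Λ k {a, b, e}).card : ℤ))| ≤ 1 := by
  obtain ⟨haff, hpair, htriple, hfour⟩ := hΛ
  set D := Λ \ {a, b} with hDdef
  have hDsub : ∀ d ∈ D, d ∈ Λ ∧ d ≠ a ∧ d ≠ b := by
    intro d hd
    rw [hDdef, Finset.mem_sdiff] at hd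
    refine ⟨hd.1, ?_, ?_⟩ <;> intro h <;> exact hd.2 (by simp [h])
  set f : PP → ℝ → ℝ := fun d t => d (px + t * w.1) (py + t * w.2.1) - (pz + t * w.2.2)
    with hfdef
  have haf : ∀ d ∈ Λ, ∀ t : ℝ, f d t = f d 0 + t * (f d 1 - f d 0) := by
    intro d hd t
    obtain ⟨α, β, δ, hd'⟩ := haff d hd
    simp only [hfdef, hd']; ring
  have hf0 : ∀ d : PP, f d 0 = d px py - pz := by
    intro d; simp [hfdef]
  have hfz : ∀ (d : PP) (s : ℝ),
      f d s = 0 ↔ d (px + s * w.1) (py + s * w.2.1) = pz + s * w.2.2 := by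
    intro d s; rw [hfdef]; exact sub_eq_zero
  have hfab : ∀ t : ℝ, f a t = 0 ∧ f b t = 0 := by
    intro t
    exact ⟨(hfz a t).2 (hline t).1, (hfz b t).2 (hline t).2⟩
  have hgenD : ∀ d ∈ D, d px py ≠ pz := fun d hd => hgen d (hDdef ▸ hd)
  have hgen' : ∀ d ∈ D, f d 0 ≠ 0 := by
    intro d hd; rw [hf0]; exact sub_ne_zero.2 (hgenD d hd)
  have hdistinct : ∀ d ∈ D, ∀ d' ∈ D, ∀ t : ℝ, f d t = 0 → f d' t = 0 → d = d' := by
    intro d hd d' hd' t hdt hd't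
    by_contra hne
    obtain ⟨hdΛ, hda, hdb⟩ := hDsub d hd
    obtain ⟨hd'Λ, hd'a, hd'b⟩ := hDsub d' hd'
    refine hfour a ha b hb d hdΛ d' hd'Λ hab (Ne.symm hda) (Ne.symm hd'a)
      (Ne.symm hdb) (Ne.symm hd'b) hne ?_
    refine ⟨px + t * w.1, py + t * w.2.1, ?_, ?_, ?_⟩
    · rw [(hline t).1, (hline t).2]
    · rw [(hline t).1, (hfz d t).1 hdt]
    · rw [(hline t).1, (hfz d' t).1 hd't]
  set X : PP → Prop := fun d => ∃ s : ℝ, 0 < s ∧ f d s = 0 with hXdef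
  have hXiff : ∀ d : PP,
      (∃ s : ℝ, 0 < s ∧ d (px + s * w.1) (py + s * w.2.1) = pz + s * w.2.2) ↔ X d := by
    intro d
    rw [hXdef]
    exact exists_congr fun s => and_congr_right fun _ => (hfz d s).symm
  set σ : PP → ℝ := fun d => -(f d 0) / (f d 1 - f d 0) with hσdef
  have hroot : ∀ d ∈ D, X d → f d (σ d) = 0 ∧ 0 < σ d ∧ ∀ s : ℝ, f d s = 0 → s = σ d := by
    intro d hd hX
    obtain ⟨s, hs, hfs⟩ := hX
    have hc : f d 1 - f d 0 ≠ 0 := by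
      intro h
      have h2 := haf d (hDsub d hd).1 s
      rw [h, hfs] at h2
      exact hgen' d hd (by linarith)
    have huniq : ∀ s' : ℝ, f d s' = 0 → s' = σ d := by
      intro s' h'
      have h2 := haf d (hDsub d hd).1 s'
      rw [h'] at h2
      have hσd : σ d = -(f d 0) / (f d 1 - f d 0) := rfl
      rw [hσd]
      field_simp
      linarith
    have hσs := huniq s hfs
    exact ⟨hσs ▸ hfs, hσs ▸ hs, huniq⟩
  have hsign : ∀ e ∈ D, X e → ∀ d ∈ D, d ≠ e →
      (f d (σ e) < 0 ↔ (0 < f d 0 ∧ (X d ∧ σ d < σ e)) ∨ (f d 0 < 0 ∧ ¬(X d ∧ σ d < σ e))) := by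
    intro e he hXe d hd hde
    obtain ⟨hre, hte, -⟩ := hroot e he hXe
    have hd0 := hgen' d hd
    have hdΛ := (hDsub d hd).1
    have hft : f d (σ e) ≠ 0 := fun h => hde (hdistinct d hd e he (σ e) h hre)
    have hexp := haf d hdΛ
    have hexpt := hexp (σ e)
    rcases hd0.lt_or_gt with hneg | hpos
    · -- f d 0 < 0
      constructor
      · intro hlt
        refine Or.inr ⟨hneg, ?_⟩
        rintro ⟨hXd, hσlt⟩
        obtain ⟨hrd, hσpos, -⟩ := hroot d hd hXd
        have h1 : f d 0 + σ d * (f d 1 - f d 0) = 0 := by rw [← hexp (σ d)]; exact hrd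
        have h2 : f d 0 + σ e * (f d 1 - f d 0) < 0 := by rw [← hexpt]; exact hlt
        have hcpos : 0 < f d 1 - f d 0 := by nlinarith
        nlinarith [mul_pos (sub_pos.2 hσlt) hcpos]
      · rintro (⟨h, -⟩ | ⟨-, hnq⟩)
        · linarith
        · by_contra hge
          push_neg at hge
          have hgt : 0 < f d 0 + σ e * (f d 1 - f d 0) := by
            rw [← hexpt]; exact lt_of_le_of_ne hge (Ne.symm hft)
          have hcpos : 0 < f d 1 - f d 0 := by nlinarith
          have hs0 : f d (-(f d 0) / (f d 1 - f d 0)) = 0 := by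
            rw [hexp]; field_simp; ring
          have hs0pos : 0 < -(f d 0) / (f d 1 - f d 0) := div_pos (by linarith) hcpos
          have hXd : X d := ⟨_, hs0pos, hs0⟩
          obtain ⟨-, -, huq⟩ := hroot d hd hXd
          have hσeq : σ d = -(f d 0) / (f d 1 - f d 0) := (huq _ hs0).symm
          refine hnq ⟨hXd, ?_⟩
          rw [hσeq, div_lt_iff₀ hcpos]
          linarith
    · -- 0 < f d 0
      constructor
      · intro hlt
        have h2 : f d 0 + σ e * (f d 1 - f d 0) < 0 := by rw [← hexpt]; exact hlt
        have hcneg : f d 1 - f d 0 < 0 := by nlinarith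
        have hs0 : f d (-(f d 0) / (f d 1 - f d 0)) = 0 := by
          rw [hexp]; field_simp [hcneg.ne]; ring
        have hs0pos : 0 < -(f d 0) / (f d 1 - f d 0) := div_pos_of_neg_of_neg (by linarith) hcneg
        have hXd : X d := ⟨_, hs0pos, hs0⟩
        obtain ⟨-, -, huq⟩ := hroot d hd hXd
        have hσeq : σ d = -(f d 0) / (f d 1 - f d 0) := (huq _ hs0).symm
        refine Or.inl ⟨hpos, hXd, ?_⟩
        rw [hσeq, div_lt_iff_of_neg hcneg]
        linarith
      · rintro (⟨-, hXd, hσlt⟩ | ⟨h, -⟩)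
        · obtain ⟨hrd, hσpos, -⟩ := hroot d hd hXd
          have h1 : f d 0 + σ d * (f d 1 - f d 0) = 0 := by rw [← hexp (σ d)]; exact hrd
          have hcneg : f d 1 - f d 0 < 0 := by nlinarith
          rw [hexpt]
          nlinarith [mul_neg_of_pos_of_neg (sub_pos.2 hσlt) hcneg]
        · linarith
  have hupdown : ∀ d ∈ D, ¬ d px py < pz → pz < d px py := by
    intro d hd h
    exact lt_of_le_of_ne (not_lt.1 h) (Ne.symm (hgenD d hd))
  have hkey : ∀ e ∈ D, X e →
      (((Λ.filter fun d => d (px + σ e * w.1) (py + σ e * w.2.1) < pz + σ e * w.2.2).card : ℤ))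
        = ((D.filter fun d => pz < d px py ∧ X d ∧ σ d < σ e).card : ℤ)
          + ((D.filter fun d => d px py < pz).card : ℤ)
          - ((D.filter fun d => d px py < pz ∧ X d ∧ σ d < σ e).card : ℤ)
          - (if e px py < pz then 1 else 0) := by
    intro e he hXe
    obtain ⟨hre, hte, -⟩ := hroot e he hXe
    have heΛ := (hDsub e he).1
    have hstep1 : (Λ.filter fun d => d (px + σ e * w.1) (py + σ e * w.2.1) < pz + σ e * w.2.2)
        = D.filter fun d => d (px + σ e * w.1) (py + σ e * w.2.1) < pz + σ e * w.2.2 := by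
      ext d
      simp only [Finset.mem_filter, hDdef, Finset.mem_sdiff, Finset.mem_insert,
        Finset.mem_singleton]
      constructor
      · rintro ⟨hdΛ, hP⟩
        refine ⟨⟨hdΛ, ?_⟩, hP⟩
        rintro (rfl | rfl)
        · rw [(hfz d (σ e)).1 (hfab (σ e)).1] at hP; exact lt_irrefl _ hP
        · rw [(hfz d (σ e)).1 (hfab (σ e)).2] at hP; exact lt_irrefl _ hP
      · rintro ⟨⟨hdΛ, -⟩, hP⟩; exact ⟨hdΛ, hP⟩
    have L0 : (((D.filter fun d => d (px + σ e * w.1) (py + σ e * w.2.1) < pz + σ e * w.2.2).card : ℤ))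
        = ∑ d ∈ D, if d (px + σ e * w.1) (py + σ e * w.2.1) < pz + σ e * w.2.2 then (1:ℤ) else 0 := by
      rw [Finset.card_filter]
      push_cast
      exact Finset.sum_congr rfl fun d _ => by split_ifs <;> simp
    have L1 : ((D.filter fun d => pz < d px py ∧ X d ∧ σ d < σ e).card : ℤ)
        = ∑ d ∈ D, if pz < d px py ∧ X d ∧ σ d < σ e then (1:ℤ) else 0 := by
      rw [Finset.card_filter]
      push_cast
      exact Finset.sum_congr rfl fun d _ => by split_ifs <;> simp
    have L2 : ((D.filter fun d => d px py < pz).card : ℤ)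
        = ∑ d ∈ D, if d px py < pz then (1:ℤ) else 0 := by
      rw [Finset.card_filter]
      push_cast
      exact Finset.sum_congr rfl fun d _ => by split_ifs <;> simp
    have L3 : ((D.filter fun d => d px py < pz ∧ X d ∧ σ d < σ e).card : ℤ)
        = ∑ d ∈ D, if d px py < pz ∧ X d ∧ σ d < σ e then (1:ℤ) else 0 := by
      rw [Finset.card_filter]
      push_cast
      exact Finset.sum_congr rfl fun d _ => by split_ifs <;> simp
    have hχ : (if e px py < pz then (1:ℤ) else 0)
        = ∑ d ∈ D, (if d = e ∧ e px py < pz then (1:ℤ) else 0) := by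
      rw [Finset.sum_eq_single e]
      · simp
      · intro d _ hne
        rw [if_neg fun h => hne h.1]
      · intro h; exact absurd he h
    rw [hstep1, L0, L1, L2, L3, hχ,
      ← Finset.sum_add_distrib, ← Finset.sum_sub_distrib, ← Finset.sum_sub_distrib]
    apply Finset.sum_congr rfl
    intro d hdD
    by_cases hdee : d = e
    · subst hdee
      have hltf : ¬ d (px + σ d * w.1) (py + σ d * w.2.1) < pz + σ d * w.2.2 := by
        rw [(hfz d (σ d)).1 hre]
        exact lt_irrefl _
      have c1 : ¬ (pz < d px py ∧ X d ∧ σ d < σ d) := fun h => lt_irrefl (σ d) h.2.2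
      have c3 : ¬ (d px py < pz ∧ X d ∧ σ d < σ d) := fun h => lt_irrefl (σ d) h.2.2
      rw [if_neg hltf, if_neg c1, if_neg c3]
      by_cases hdn : d px py < pz
      · have c4 : d = d ∧ d px py < pz := ⟨rfl, hdn⟩
        rw [if_pos hdn, if_pos c4]; ring
      · have c4 : ¬ (d = d ∧ d px py < pz) := fun h => hdn h.2
        rw [if_neg hdn, if_neg c4]; ring
    · have hs := hsign e he hXe d hdD hdee
      have hlt : d (px + σ e * w.1) (py + σ e * w.2.1) < pz + σ e * w.2.2 ↔ f d (σ e) < 0 := by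
        rw [hfdef]; constructor <;> intro <;> dsimp only at * <;> linarith
      have h01 : 0 < f d 0 ↔ pz < d px py := by rw [hf0]; exact sub_pos
      have h02 : f d 0 < 0 ↔ d px py < pz := by rw [hf0]; exact sub_neg
      have c4 : ¬ (d = e ∧ e px py < pz) := fun h => hdee h.1
      rw [if_neg c4]
      by_cases hup : pz < d px py
      · have hnd : ¬ d px py < pz := asymm hup
        have hnd3 : ¬ (d px py < pz ∧ X d ∧ σ d < σ e) := fun h => hnd h.1
        by_cases hQ : X d ∧ σ d < σ e
        · have c0 : d (px + σ e * w.1) (py + σ e * w.2.1) < pz + σ e * w.2.2 :=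
            hlt.2 (hs.2 (Or.inl ⟨h01.2 hup, hQ⟩))
          have c1 : pz < d px py ∧ X d ∧ σ d < σ e := ⟨hup, hQ⟩
          rw [if_pos c0, if_pos c1, if_neg hnd, if_neg hnd3]
          ring
        · have hnf : ¬ f d (σ e) < 0 := by
            intro h
            rcases hs.1 h with ⟨-, hq⟩ | ⟨hn, -⟩
            · exact hQ hq
            · exact hnd (h02.1 hn)
          have c0 : ¬ d (px + σ e * w.1) (py + σ e * w.2.1) < pz + σ e * w.2.2 :=
            fun h => hnf (hlt.1 h)
          have c1 : ¬ (pz < d px py ∧ X d ∧ σ d < σ e) := fun h => hQ h.2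
          rw [if_neg c0, if_neg c1, if_neg hnd, if_neg hnd3]
          ring
      · have hdn : d px py < pz :=
          lt_of_le_of_ne (not_lt.1 hup) (hgenD d hdD)
        have hnu1 : ¬ (pz < d px py ∧ X d ∧ σ d < σ e) := fun h => hup h.1
        by_cases hQ : X d ∧ σ d < σ e
        · have hnf : ¬ f d (σ e) < 0 := by
            intro h
            rcases hs.1 h with ⟨hp, -⟩ | ⟨-, hq⟩
            · exact hup (h01.1 hp)
            · exact hq hQ
          have c0 : ¬ d (px + σ e * w.1) (py + σ e * w.2.1) < pz + σ e * w.2.2 :=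
            fun h => hnf (hlt.1 h)
          have c3 : d px py < pz ∧ X d ∧ σ d < σ e := ⟨hdn, hQ⟩
          rw [if_neg c0, if_neg hnu1, if_pos hdn, if_pos c3]
          ring
        · have c0 : d (px + σ e * w.1) (py + σ e * w.2.1) < pz + σ e * w.2.2 :=
            hlt.2 (hs.2 (Or.inr ⟨h02.2 hdn, hQ⟩))
          have c3 : ¬ (d px py < pz ∧ X d ∧ σ d < σ e) := fun h => hQ h.2
          rw [if_pos c0, if_neg hnu1, if_pos hdn, if_neg c3]
          ring
  set m : ℤ := (k : ℤ) - ((D.filter fun d => d px py < pz).card : ℤ) with hm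
  have hcorr : ∀ e ∈ D, X e → (IsKCorridorTriple Λ k {a, b, e} ↔
      ((D.filter fun d => pz < d px py ∧ X d ∧ σ d < σ e).card : ℤ)
        - ((D.filter fun d => d px py < pz ∧ X d ∧ σ d < σ e).card : ℤ)
        = m + (if e px py < pz then 1 else 0)) := by
    intro e he hXe
    obtain ⟨hre, hte, -⟩ := hroot e he hXe
    obtain ⟨heΛ, hea, heb⟩ := hDsub e he
    have hkey' := hkey e he hXe
    have hlevel : level Λ (px + σ e * w.1) (py + σ e * w.2.1) (pz + σ e * w.2.2) = k ↔
        IsKCorridorTriple Λ k {a, b, e} := by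
      constructor
      · intro hl
        refine ⟨px + σ e * w.1, py + σ e * w.2.1, pz + σ e * w.2.2, ?_, hl⟩
        intro g hg
        rcases Finset.mem_insert.1 hg with rfl | hg'
        · exact (hline (σ e)).1
        rcases Finset.mem_insert.1 hg' with rfl | hg''
        · exact (hline (σ e)).2
        · rw [Finset.mem_singleton.1 hg'']
          exact (hfz e (σ e)).1 hre
      · rintro ⟨x, y, z, hmem, hl⟩
        have hax : a x y = z := hmem a (Finset.mem_insert_self a _)
        have hbx : b x y = z :=
          hmem b (Finset.mem_insert_of_mem (Finset.mem_insert_self b _))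
        have hex : e x y = z := hmem e (Finset.mem_insert_of_mem
          (Finset.mem_insert_of_mem (Finset.mem_singleton_self e)))
        obtain ⟨q, -, huq⟩ := htriple a ha b hb e heΛ hab (Ne.symm hea) (Ne.symm heb)
        have h1 : ((x, y) : ℝ × ℝ) = q := huq (x, y) ⟨by rw [hax, hbx], by rw [hax, hex]⟩
        have h2 : ((px + σ e * w.1, py + σ e * w.2.1) : ℝ × ℝ) = q := by
          refine huq _ ⟨?_, ?_⟩
          · show a _ _ = b _ _
            rw [(hline (σ e)).1, (hline (σ e)).2]
          · show a _ _ = e _ _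
            rw [(hline (σ e)).1, (hfz e (σ e)).1 hre]
        have h3 : (x, y) = ((px + σ e * w.1, py + σ e * w.2.1) : ℝ × ℝ) := h1.trans h2.symm
        have hx : x = px + σ e * w.1 := congrArg Prod.fst h3
        have hy : y = py + σ e * w.2.1 := congrArg Prod.snd h3
        have hz : z = pz + σ e * w.2.2 := by
          rw [← hax, hx, hy, (hline (σ e)).1]
        rw [← hx, ← hy, ← hz]
        exact hl
    rw [← hlevel]
    have hlv : (level Λ (px + σ e * w.1) (py + σ e * w.2.1) (pz + σ e * w.2.2) : ℤ)
        = ((Λ.filter fun d => d (px + σ e * w.1) (py + σ e * w.2.1) < pz + σ e * w.2.2).card : ℤ) := rfl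
    constructor
    · intro hl
      have hZ : ((Λ.filter fun d => d (px + σ e * w.1) (py + σ e * w.2.1) < pz + σ e * w.2.2).card : ℤ)
          = (k : ℤ) := by
        rw [← hlv]
        exact_mod_cast hl
      rw [hkey'] at hZ
      rw [hm]
      split_ifs at hZ ⊢
      all_goals (linarith)
    · intro heq
      have hZ : ((Λ.filter fun d => d (px + σ e * w.1) (py + σ e * w.2.1) < pz + σ e * w.2.2).card : ℤ)
          = (k : ℤ) := by
        rw [hkey']
        rw [hm] at heq
        split_ifs at heq ⊢
        all_goals (linarith)
      rw [← hlv] at hZ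
      exact_mod_cast hZ
  set ε : ℝ → ℤ := fun r => if ∃ d ∈ D, f d r = 0 ∧ d px py < pz then -1 else 1 with hεdef
  have hεval : ∀ x : ℝ, ε x = 1 ∨ ε x = -1 := by
    intro x
    have hx : ε x = if ∃ d ∈ D, f d x = 0 ∧ d px py < pz then -1 else 1 := rfl
    rw [hx]
    split_ifs
    exacts [Or.inr rfl, Or.inl rfl]
  have hεσ : ∀ e ∈ D, X e → ε (σ e) = if e px py < pz then -1 else 1 := by
    intro e he hXe
    obtain ⟨hre, -, -⟩ := hroot e he hXe
    have hx : ε (σ e) = if ∃ d ∈ D, f d (σ e) = 0 ∧ d px py < pz then -1 else 1 := rfl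
    rw [hx]
    by_cases hdn : e px py < pz
    · rw [if_pos hdn, if_pos ⟨e, he, hre, hdn⟩]
    · rw [if_neg hdn, if_neg ?_]
      rintro ⟨d, hd, hfd, hddn⟩
      exact hdn ((hdistinct d hd e he (σ e) hfd hre) ▸ hddn)
  set Dc := D.filter X with hDc
  have hinj : ∀ d ∈ Dc, ∀ d' ∈ Dc, σ d = σ d' → d = d' := by
    intro d hd d' hd' heq
    obtain ⟨hdD, hdX⟩ := Finset.mem_filter.1 hd
    obtain ⟨hd'D, hd'X⟩ := Finset.mem_filter.1 hd'
    obtain ⟨hr, -, -⟩ := hroot d hdD hdX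
    obtain ⟨hr', -, -⟩ := hroot d' hd'D hd'X
    exact hdistinct d hdD d' hd'D (σ d') (heq ▸ hr) hr' 
  set E := Dc.image σ with hE
  have hsum : ∀ e ∈ D, X e → (E.filter (· < σ e)).sum ε
      = ((D.filter fun d => pz < d px py ∧ X d ∧ σ d < σ e).card : ℤ)
        - ((D.filter fun d => d px py < pz ∧ X d ∧ σ d < σ e).card : ℤ) := by
    intro e he hXe
    have himgset : E.filter (· < σ e) = (Dc.filter fun d => σ d < σ e).image σ := by
      ext r
      simp only [hE, Finset.mem_filter, Finset.mem_image]
      constructor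
      · rintro ⟨⟨d, hd, rfl⟩, hlt⟩
        exact ⟨d, ⟨hd, hlt⟩, rfl⟩
      · rintro ⟨d, ⟨hd, hlt⟩, rfl⟩
        exact ⟨⟨d, hd, rfl⟩, hlt⟩
    rw [himgset, Finset.sum_image (fun x hx y hy hxy =>
      hinj x (Finset.mem_of_mem_filter x hx) y (Finset.mem_of_mem_filter y hy) hxy)]
    have hcong : ∑ d ∈ Dc.filter (fun d => σ d < σ e), ε (σ d)
        = ∑ d ∈ Dc.filter (fun d => σ d < σ e), (if d px py < pz then (-1:ℤ) else 1) := by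
      apply Finset.sum_congr rfl
      intro d hd
      obtain ⟨hdDc, -⟩ := Finset.mem_filter.1 hd
      obtain ⟨hdD, hdX⟩ := Finset.mem_filter.1 hdDc
      exact hεσ d hdD hdX
    rw [hcong, Finset.sum_ite, Finset.sum_const, Finset.sum_const]
    have hs1 : (Dc.filter fun d => σ d < σ e).filter (fun d => d px py < pz)
        = D.filter fun d => d px py < pz ∧ X d ∧ σ d < σ e := by
      ext d
      simp only [hDc, Finset.mem_filter]
      constructor
      · rintro ⟨⟨⟨h1, h2⟩, h3⟩, h4⟩
        exact ⟨h1, h4, h2, h3⟩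
      · rintro ⟨h1, h2, h3, h4⟩
        exact ⟨⟨⟨h1, h3⟩, h4⟩, h2⟩
    have hs2 : (Dc.filter fun d => σ d < σ e).filter (fun d => ¬ d px py < pz)
        = D.filter fun d => pz < d px py ∧ X d ∧ σ d < σ e := by
      ext d
      simp only [hDc, Finset.mem_filter]
      constructor
      · rintro ⟨⟨⟨hdD, hdX⟩, hσ⟩, hnd⟩
        exact ⟨hdD, lt_of_le_of_ne (not_lt.1 hnd) (Ne.symm (hgenD d hdD)), hdX, hσ⟩
      · rintro ⟨hdD, hup, hdX, hσ⟩
        exact ⟨⟨⟨hdD, hdX⟩, hσ⟩, asymm hup⟩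
    rw [hs1, hs2]
    push_cast
    ring
  have himg1 : (E.filter fun x => ε x = 1 ∧ (E.filter (· < x)).sum ε = m)
      = (D.filter fun e => X e ∧ pz < e px py ∧ IsKCorridorTriple Λ k {a, b, e}).image σ := by
    ext r
    constructor
    · intro hr
      obtain ⟨hrE, hε1, hsum1⟩ := Finset.mem_filter.1 hr
      obtain ⟨d, hdDc, rfl⟩ := Finset.mem_image.1 (hE ▸ hrE)
      obtain ⟨hdD, hdX⟩ := Finset.mem_filter.1 hdDc
      have hup : pz < d px py := by
        by_contra h
        have hdn : d px py < pz := lt_of_le_of_ne (not_lt.1 h) (hgenD d hdD)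
        rw [hεσ d hdD hdX, if_pos hdn] at hε1
        norm_num at hε1
      refine Finset.mem_image.2 ⟨d, Finset.mem_filter.2 ⟨hdD, hdX, hup, ?_⟩, rfl⟩
      rw [hcorr d hdD hdX, if_neg (asymm hup)]
      rw [hsum d hdD hdX] at hsum1
      linarith
    · intro hr
      obtain ⟨d, hdmem, rfl⟩ := Finset.mem_image.1 hr
      obtain ⟨hdD, hdX, hup, hdK⟩ := Finset.mem_filter.1 hdmem
      refine Finset.mem_filter.2 ⟨hE ▸ Finset.mem_image.2 ⟨d, Finset.mem_filter.2 ⟨hdD, hdX⟩, rfl⟩, ?_, ?_⟩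
      · rw [hεσ d hdD hdX, if_neg (asymm hup)]
      · have hc := (hcorr d hdD hdX).1 hdK
        rw [if_neg (asymm hup)] at hc
        rw [hsum d hdD hdX]
        linarith
  have himg2 : (E.filter fun x => ε x = -1 ∧ (E.filter (· < x)).sum ε = m + 1)
      = (D.filter fun e => X e ∧ e px py < pz ∧ IsKCorridorTriple Λ k {a, b, e}).image σ := by
    ext r
    constructor
    · intro hr
      obtain ⟨hrE, hε1, hsum1⟩ := Finset.mem_filter.1 hr
      obtain ⟨d, hdDc, rfl⟩ := Finset.mem_image.1 (hE ▸ hrE)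
      obtain ⟨hdD, hdX⟩ := Finset.mem_filter.1 hdDc
      have hdn : d px py < pz := by
        by_contra h
        rw [hεσ d hdD hdX, if_neg h] at hε1
        norm_num at hε1
      refine Finset.mem_image.2 ⟨d, Finset.mem_filter.2 ⟨hdD, hdX, hdn, ?_⟩, rfl⟩
      rw [hcorr d hdD hdX, if_pos hdn]
      rw [hsum d hdD hdX] at hsum1
      linarith
    · intro hr
      obtain ⟨d, hdmem, rfl⟩ := Finset.mem_image.1 hr
      obtain ⟨hdD, hdX, hdn, hdK⟩ := Finset.mem_filter.1 hdmem
      refine Finset.mem_filter.2 ⟨hE ▸ Finset.mem_image.2 ⟨d, Finset.mem_filter.2 ⟨hdD, hdX⟩, rfl⟩, ?_, ?_⟩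
      · rw [hεσ d hdD hdX, if_pos hdn]
      · have hc := (hcorr d hdD hdX).1 hdK
        rw [if_pos hdn] at hc
        rw [hsum d hdD hdX]
        linarith
  have hc1 : (D.filter fun e =>
        (∃ s : ℝ, 0 < s ∧ e (px + s * w.1) (py + s * w.2.1) = pz + s * w.2.2) ∧
          pz < e px py ∧ IsKCorridorTriple Λ k {a, b, e})
      = D.filter fun e => X e ∧ pz < e px py ∧ IsKCorridorTriple Λ k {a, b, e} := by
    apply Finset.filter_congr
    intro e _
    rw [hXiff e]
  have hc2 : (D.filter fun e =>
        (∃ s : ℝ, 0 < s ∧ e (px + s * w.1) (py + s * w.2.1) = pz + s * w.2.2) ∧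
          e px py < pz ∧ IsKCorridorTriple Λ k {a, b, e})
      = D.filter fun e => X e ∧ e px py < pz ∧ IsKCorridorTriple Λ k {a, b, e} := by
    apply Finset.filter_congr
    intro e _
    rw [hXiff e]
  have hcard1 : (D.filter fun e =>
        X e ∧ pz < e px py ∧ IsKCorridorTriple Λ k {a, b, e}).card
      = (E.filter fun x => ε x = 1 ∧ (E.filter (· < x)).sum ε = m).card := by
    rw [himg1]
    exact (Finset.card_image_of_injOn fun x hx y hy hxy =>
      hinj x (Finset.mem_filter.2 ⟨(Finset.mem_filter.1 (Finset.mem_coe.1 hx)).1,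
        ((Finset.mem_filter.1 (Finset.mem_coe.1 hx)).2).1⟩)
        y (Finset.mem_filter.2 ⟨(Finset.mem_filter.1 (Finset.mem_coe.1 hy)).1,
        ((Finset.mem_filter.1 (Finset.mem_coe.1 hy)).2).1⟩) hxy).symm
  have hcard2 : (D.filter fun e =>
        X e ∧ e px py < pz ∧ IsKCorridorTriple Λ k {a, b, e}).card
      = (E.filter fun x => ε x = -1 ∧ (E.filter (· < x)).sum ε = m + 1).card := by
    rw [himg2]
    exact (Finset.card_image_of_injOn fun x hx y hy hxy =>
      hinj x (Finset.mem_filter.2 ⟨(Finset.mem_filter.1 (Finset.mem_coe.1 hx)).1,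
        ((Finset.mem_filter.1 (Finset.mem_coe.1 hx)).2).1⟩)
        y (Finset.mem_filter.2 ⟨(Finset.mem_filter.1 (Finset.mem_coe.1 hy)).1,
        ((Finset.mem_filter.1 (Finset.mem_coe.1 hy)).2).1⟩) hxy).symm
  rw [hc1, hc2, hcard1, hcard2, walk_lemma m ε hεval E]
  split_ifs <;> norm_num
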